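/- Let θ_t^{BP}(α) be the accumulate BP(λ) iterates with initial parameter θ_0 and learning rate α. Then for every 1 ≤ t ≤ T, lim_{α→0⁺} (θ_t^{BP}(α) − θ_0)/α = Σ_{a=0}^{t−1} Δ̄_a^t; that is, to first order in α the accumulate BP(λ) update equals the offline λ-SG update evaluated at θ_0. -/

import Mathlib

open Filter Finset Matrix

noncomputable section

/-- The Euclidean (ℓ²) norm of a finite real vector. -/
def euclNorm {k : ℕ} (x : Fin k → ℝ) : ℝ := Real.sqrt (∑ i, x i ^ 2)

/-- Data of the synthetic-gradient setting: the gradient discount factor `γ`,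
the trace-decay parameter `lam` (λ), the RNN Jacobians `J t = ∂h_{t+1}/∂h_t`,
the immediate loss gradients `c t = ∂L_t/∂h_t` (row vectors), the synthesiser
maps `g t : θ ↦ g(h_t; θ)` (producing row vectors), and the initial parameter `θ0`. -/
structure SGData (d m : ℕ) where
  γ : ℝ
  lam : ℝ
  J : ℕ → Matrix (Fin d) (Fin d) ℝ
  c : ℕ → Fin d → ℝ
  g : ℕ → (Fin m → ℝ) → Fin d → ℝ
  θ0 : Fin m → ℝ

namespace SGData

variable {d m : ℕ}

/-- Propagator `Pfrom a n = P(a+n, a) = J_{a+n-1} ⋯ J_a`. -/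
def Pfrom (p : SGData d m) (a : ℕ) : ℕ → Matrix (Fin d) (Fin d) ℝ
  | 0 => 1
  | n + 1 => p.J (a + n) * p.Pfrom a n

/-- Propagator `P b a = P(b, a) = J_{b-1} ⋯ J_a` (for `b ≥ a`). -/
def P (p : SGData d m) (b a : ℕ) : Matrix (Fin d) (Fin d) ℝ := p.Pfrom a (b - a)

/-- The Jacobian matrix `Dg_t(θ) ∈ ℝ^{d×m}` of the synthesiser map `g t` at `θ`. -/
def Dg (p : SGData d m) (t : ℕ) (θ : Fin m → ℝ) : Matrix (Fin d) (Fin m) ℝ :=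
  Matrix.of fun i j => fderiv ℝ (p.g t) θ (Pi.single j 1) i

/-- The temporal-difference error `δ_t` at parameter `θ`:
`δ_t = (c_{t+1} + γ g_{t+1}(θ)) J_t − g_t(θ)`. -/
def tdErr (p : SGData d m) (t : ℕ) (θ : Fin m → ℝ) : Fin d → ℝ :=
  Matrix.vecMul (p.c (t + 1) + p.γ • p.g (t + 1) θ) (p.J t) - p.g t θ

/-- The accumulate BP(λ) state `(θ_t^{BP}, e_t)` with learning rate `α`:
`θ_0^{BP} = θ0`, `e_0 = Dg_0(θ_0^{BP})`,
`θ_{t+1}^{BP} = θ_t^{BP} + α (δ_t e_t)ᵀ`, `e_{t+1} = γλ J_t e_t + Dg_{t+1}(θ_{t+1}^{BP})`. -/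
def BPstate (p : SGData d m) (α : ℝ) : ℕ → (Fin m → ℝ) × Matrix (Fin d) (Fin m) ℝ
  | 0 => (p.θ0, p.Dg 0 p.θ0)
  | t + 1 =>
    let s := p.BPstate α t
    let θ' := s.1 + α • Matrix.vecMul (p.tdErr t s.1) s.2
    (θ', (p.γ * p.lam) • (p.J t * s.2) + p.Dg (t + 1) θ')

/-- The accumulate BP(λ) iterate `θ_t^{BP}(α)`. -/
def θBP (p : SGData d m) (α : ℝ) (t : ℕ) : Fin m → ℝ := (p.BPstate α t).1

/-- `Ḡ_a^{(n)}`: the n-step synthetic gradient with the bootstrap estimate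
evaluated at the initial parameter `θ0`. -/
def Gbar (p : SGData d m) (a n : ℕ) : Fin d → ℝ :=
  (∑ k ∈ Finset.range n, p.γ ^ k • Matrix.vecMul (p.c (a + k + 1)) (p.P (a + k + 1) a))
    + p.γ ^ n • Matrix.vecMul (p.g (a + n) p.θ0) (p.P (a + n) a)

/-- `Ḡ_a^{λ|t}`: the interim λ-weighted synthetic gradient evaluated at `θ0`. -/
def GbarLam (p : SGData d m) (a t : ℕ) : Fin d → ℝ :=
  (1 - p.lam) • (∑ n ∈ Finset.range (t - a - 1), p.lam ^ n • p.Gbar a (n + 1))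
    + p.lam ^ (t - a - 1) • p.Gbar a (t - a)

/-- `Δ̄_a^t = ((Ḡ_a^{λ|t} − g_a(θ0)) Dg_a(θ0))ᵀ ∈ ℝ^m`. -/
def Δbar (p : SGData d m) (a t : ℕ) : Fin m → ℝ :=
  Matrix.vecMul (p.GbarLam a t - p.g a p.θ0) (p.Dg a p.θ0)

/-- Online n-step target `G_k^{(n)}` using bootstrap estimates
`ĝ_s = g_s(hist (s−1))` taken from the online history `hist`. -/
def GnOn (p : SGData d m) (hist : ℕ → Fin m → ℝ) (k n : ℕ) : Fin d → ℝ :=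
  (∑ j ∈ Finset.range n, p.γ ^ j • Matrix.vecMul (p.c (k + j + 1)) (p.P (k + j + 1) k))
    + p.γ ^ n • Matrix.vecMul (p.g (k + n) (hist (k + n - 1))) (p.P (k + n) k)

/-- Online interim target `G_k^{λ|H}` with horizon `H`. -/
def GLamOn (p : SGData d m) (hist : ℕ → Fin m → ℝ) (H k : ℕ) : Fin d → ℝ :=
  (1 - p.lam) • (∑ n ∈ Finset.range (H - k - 1), p.lam ^ n • p.GnOn hist k (n + 1))
    + p.lam ^ (H - k - 1) • p.GnOn hist k (H - k)

/-- Inner pass of the online λ-SG algorithm at horizon `H`: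
`φ_0 = θ^{⟨H−1⟩}` and `φ_{k+1} = φ_k + α ((G_k^{λ|H} − g_k(φ_k)) Dg_k(φ_k))ᵀ`. -/
def phi (p : SGData d m) (α : ℝ) (hist : ℕ → Fin m → ℝ) (H : ℕ) : ℕ → Fin m → ℝ
  | 0 => hist (H - 1)
  | k + 1 =>
    p.phi α hist H k
      + α • Matrix.vecMul (p.GLamOn hist H k - p.g k (p.phi α hist H k))
          (p.Dg k (p.phi α hist H k))

/-- History of online λ-SG iterates: `hist α t s = θ^{⟨s⟩}` for all `s ≤ t`,
with `θ^{⟨0⟩} = θ0` and `θ^{⟨t+1⟩} = φ_{t+1}` from the inner pass at horizon `t+1`. -/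
def hist (p : SGData d m) (α : ℝ) : ℕ → ℕ → Fin m → ℝ
  | 0 => fun _ => p.θ0
  | t + 1 => Function.update (p.hist α t) (t + 1) (p.phi α (p.hist α t) (t + 1) (t + 1))

/-- The online λ-SG iterate `θ_t^λ(α) = θ^{⟨t⟩}`. -/
def θon (p : SGData d m) (α : ℝ) (t : ℕ) : Fin m → ℝ := p.hist α t t

end SGData

section Aux

variable {d m : ℕ}

/-- `vecMul` of a finite sum of row vectors. -/
lemma aux_sum_vecMul {ι : Type*} (S : Finset ι) (f : ι → Fin d → ℝ)
    (M : Matrix (Fin d) (Fin m) ℝ) :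
    Matrix.vecMul (∑ s ∈ S, f s) M = ∑ s ∈ S, Matrix.vecMul (f s) M := by
  induction S using Finset.cons_induction with
  | empty => simp
  | cons a S h ih => simp [Finset.sum_cons, Matrix.add_vecMul, ih]

/-- `vecMul` into a finite sum of matrices. -/
lemma aux_vecMul_sum {ι : Type*} (S : Finset ι) (v : Fin d → ℝ)
    (M : ι → Matrix (Fin d) (Fin m) ℝ) :
    Matrix.vecMul v (∑ s ∈ S, M s) = ∑ s ∈ S, Matrix.vecMul v (M s) := by
  induction S using Finset.cons_induction with
  | empty => ext j; simp [Matrix.vecMul, dotProduct]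
  | cons a S h ih =>
    rw [Finset.sum_cons, Finset.sum_cons, ← ih]
    ext j; simp [Matrix.vecMul, dotProduct, Finset.sum_add_distrib, mul_add]

/-- `vecMul` into a scalar multiple of a matrix. -/
lemma aux_vecMul_smul (r : ℝ) (v : Fin d → ℝ) (M : Matrix (Fin d) (Fin m) ℝ) :
    Matrix.vecMul v (r • M) = r • Matrix.vecMul v M := by
  ext j
  simp [Matrix.vecMul, dotProduct, Finset.mul_sum, mul_left_comm]

/-- Continuity of `vecMul` in both arguments. -/
lemma aux_continuous_vecMul {X : Type*} [TopologicalSpace X] {f : X → Fin d → ℝ}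
    {M : X → Matrix (Fin d) (Fin m) ℝ} (hf : Continuous f) (hM : Continuous M) :
    Continuous fun x => Matrix.vecMul (f x) (M x) := by
  refine continuous_pi fun j => ?_
  simp only [Matrix.vecMul, dotProduct]
  exact continuous_finset_sum _ fun i _ =>
    ((continuous_apply i).comp hf).mul
      (((continuous_apply j).comp ((continuous_apply i).comp hM)))

namespace SGData

/-- The limiting eligibility trace `ē_s` (the trace at learning rate 0). -/
def ebar (p : SGData d m) : ℕ → Matrix (Fin d) (Fin m) ℝ
  | 0 => p.Dg 0 p.θ0
  | s + 1 => (p.γ * p.lam) • (p.J s * ebar p s) + p.Dg (s + 1) p.θ0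

variable (p : SGData d m)

lemma BPstate_zero (t : ℕ) : p.BPstate 0 t = (p.θ0, p.ebar t) := by
  induction t with
  | zero => rfl
  | succ t ih => simp [BPstate, ih, ebar]

lemma continuous_Dg (t : ℕ) (hg : ContDiff ℝ 1 (p.g t)) : Continuous (p.Dg t) := by
  refine continuous_pi fun i => continuous_pi fun j => ?_
  have h : Continuous (fderiv ℝ (p.g t)) := hg.continuous_fderiv one_ne_zero
  exact (continuous_apply i).comp (h.clm_apply continuous_const)

lemma continuous_tdErr (t : ℕ) (hg : ∀ t : ℕ, ContDiff ℝ 1 (p.g t)) :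
    Continuous fun θ => p.tdErr t θ := by
  unfold tdErr
  exact (aux_continuous_vecMul
    (continuous_const.add ((hg (t + 1)).continuous.const_smul p.γ))
    continuous_const).sub (hg t).continuous

lemma continuous_BPstate (hg : ∀ t : ℕ, ContDiff ℝ 1 (p.g t)) (t : ℕ) :
    Continuous fun α : ℝ => p.BPstate α t := by
  induction t with
  | zero => exact continuous_const
  | succ t ih =>
    have h1 : Continuous fun α : ℝ => (p.BPstate α t).1 := continuous_fst.comp ih
    have h2 : Continuous fun α : ℝ => (p.BPstate α t).2 := continuous_snd.comp ih
    have hθ' : Continuous fun α : ℝ =>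
        (p.BPstate α t).1 + α • Matrix.vecMul (p.tdErr t (p.BPstate α t).1) (p.BPstate α t).2 :=
      h1.add (continuous_id.smul (aux_continuous_vecMul
        ((p.continuous_tdErr t hg).comp h1) h2))
    have he : Continuous fun α : ℝ =>
        (p.γ * p.lam) • (p.J t * (p.BPstate α t).2)
          + p.Dg (t + 1) ((p.BPstate α t).1
            + α • Matrix.vecMul (p.tdErr t (p.BPstate α t).1) (p.BPstate α t).2) :=
      by
        have h3 := (((show Continuous fun _ : ℝ => p.J t from continuous_const).matrix_mul
          h2).const_smul (p.γ * p.lam)).add ((p.continuous_Dg (t + 1) (hg (t + 1))).comp hθ')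
        exact h3
    exact hθ'.prodMk he

/-- First-order expansion of the BP(λ) iterates, with the limit expressed
via TD errors and limiting traces. -/
lemma tendsto_BP (hg : ∀ t : ℕ, ContDiff ℝ 1 (p.g t)) (t : ℕ) :
    Filter.Tendsto (fun α : ℝ => α⁻¹ • (p.θBP α t - p.θ0))
      (nhdsWithin 0 (Set.Ioi 0))
      (nhds (∑ s ∈ Finset.range t, Matrix.vecMul (p.tdErr s p.θ0) (p.ebar s))) := by
  induction t with
  | zero =>
    simp only [Finset.range_zero, Finset.sum_empty]
    have : (fun α : ℝ => α⁻¹ • (p.θBP α 0 - p.θ0)) = fun _ => 0 := by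
      funext α; simp [θBP, BPstate]
    rw [this]; exact tendsto_const_nhds
  | succ t ih =>
    have hcont := p.continuous_BPstate hg t
    have hc : Continuous fun α : ℝ =>
        Matrix.vecMul (p.tdErr t (p.BPstate α t).1) (p.BPstate α t).2 :=
      aux_continuous_vecMul ((p.continuous_tdErr t hg).comp (continuous_fst.comp hcont))
        (continuous_snd.comp hcont)
    have hval : Filter.Tendsto (fun α : ℝ =>
          Matrix.vecMul (p.tdErr t (p.BPstate α t).1) (p.BPstate α t).2)
        (nhdsWithin 0 (Set.Ioi 0)) (nhds (Matrix.vecMul (p.tdErr t p.θ0) (p.ebar t))) := by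
      have h0 := hc.tendsto 0
      rw [BPstate_zero] at h0
      exact h0.mono_left nhdsWithin_le_nhds
    have hsum := ih.add hval
    rw [Finset.sum_range_succ]
    refine Filter.Tendsto.congr' ?_ hsum
    filter_upwards [self_mem_nhdsWithin] with α hα
    have hα0 : (α : ℝ) ≠ 0 := ne_of_gt hα
    have hstep : p.θBP α (t + 1)
        = p.θBP α t + α • Matrix.vecMul (p.tdErr t (p.BPstate α t).1) (p.BPstate α t).2 := rfl
    rw [hstep, add_sub_right_comm, smul_add, smul_smul, inv_mul_cancel₀ hα0, one_smul]

lemma P_succ {a s : ℕ} (h : a ≤ s) : p.P (s + 1) a = p.J s * p.P s a := by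
  unfold P
  have h1 : s + 1 - a = (s - a) + 1 := by omega
  rw [h1]
  show p.J (a + (s - a)) * p.Pfrom a (s - a) = _
  rw [Nat.add_sub_cancel' h]

lemma P_self (a : ℕ) : p.P a a = 1 := by
  unfold P; rw [Nat.sub_self]; rfl

/-- Closed form for the limiting eligibility trace. -/
lemma ebar_eq (s : ℕ) :
    p.ebar s = ∑ a ∈ Finset.range (s + 1),
      (p.γ * p.lam) ^ (s - a) • (p.P s a * p.Dg a p.θ0) := by
  induction s with
  | zero => simp [ebar, P_self]
  | succ s ih =>
    rw [show p.ebar (s + 1) = (p.γ * p.lam) • (p.J s * p.ebar s) + p.Dg (s + 1) p.θ0 from rfl,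
      ih, Finset.sum_range_succ (n := s + 1)]
    congr 1
    · rw [Matrix.mul_sum, Finset.smul_sum]
      refine Finset.sum_congr rfl fun a ha => ?_
      have haa : a ≤ s := by
        have := Finset.mem_range.mp ha; omega
      rw [Matrix.mul_smul, smul_smul, ← Matrix.mul_assoc, ← p.P_succ haa]
      have : s + 1 - a = (s - a) + 1 := by omega
      rw [this, pow_succ, mul_comm]
    · rw [Nat.sub_self, pow_zero, one_smul, P_self, Matrix.one_mul]

/-- One-step telescoping of the n-step synthetic gradients. -/
lemma Gbar_succ (a n : ℕ) :
    p.Gbar a (n + 1) = p.Gbar a n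
      + p.γ ^ n • Matrix.vecMul (p.tdErr (a + n) p.θ0) (p.P (a + n) a) := by
  have hP : p.P (a + n + 1) a = p.J (a + n) * p.P (a + n) a := p.P_succ (by omega)
  unfold Gbar tdErr
  rw [Finset.sum_range_succ]
  rw [Matrix.sub_vecMul, Matrix.vecMul_vecMul, ← hP, Matrix.add_vecMul, Matrix.smul_vecMul]
  have hidx : a + (n + 1) = a + n + 1 := by omega
  rw [hidx]
  module

/-- Forward-view identity: the interim λ-weighted truncated target minus the
synthesiser output telescopes into discounted TD errors. -/
lemma GbarLam_key (a k : ℕ) :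
    (1 - p.lam) • (∑ n ∈ Finset.range k, p.lam ^ n • p.Gbar a (n + 1))
        + p.lam ^ k • p.Gbar a (k + 1)
      = p.g a p.θ0 + ∑ j ∈ Finset.range (k + 1),
          (p.γ * p.lam) ^ j • Matrix.vecMul (p.tdErr (a + j) p.θ0) (p.P (a + j) a) := by
  induction k with
  | zero =>
    have h1 : p.Gbar a 1 = p.Gbar a 0
        + p.γ ^ 0 • Matrix.vecMul (p.tdErr (a + 0) p.θ0) (p.P (a + 0) a) := p.Gbar_succ a 0
    have h0 : p.Gbar a 0 = p.g a p.θ0 := by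
      unfold Gbar; simp [P_self]
    simp only [Finset.range_zero, Finset.sum_empty, smul_zero, zero_add, pow_zero, one_smul,
      Finset.range_one, Finset.sum_singleton]
    rw [h1, h0]
    simp
  | succ k ih =>
    rw [Finset.sum_range_succ (n := k + 1), Finset.sum_range_succ (f := fun n => p.lam ^ n • p.Gbar a (n + 1))]
    rw [p.Gbar_succ a (k + 1), mul_pow]
    linear_combination (norm := module) ih

/-- The key algebraic identity: the sum of offline λ-SG updates equals the
TD-error/eligibility-trace (backward-view) sum. -/
lemma sum_Δbar_eq (t : ℕ) (ht : 1 ≤ t) :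
    ∑ a ∈ Finset.range t, p.Δbar a t
      = ∑ s ∈ Finset.range t, Matrix.vecMul (p.tdErr s p.θ0) (p.ebar s) := by
  have hΔ : ∀ a ∈ Finset.range t, p.Δbar a t
      = ∑ s ∈ Finset.Ico a t, (p.γ * p.lam) ^ (s - a) •
          Matrix.vecMul (p.tdErr s p.θ0) (p.P s a * p.Dg a p.θ0) := by
    intro a ha
    have hat : a < t := Finset.mem_range.mp ha
    obtain ⟨k, hk⟩ : ∃ k, t - a = k + 1 := ⟨t - a - 1, by omega⟩
    have hGL : p.GbarLam a t - p.g a p.θ0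
        = ∑ j ∈ Finset.range (k + 1),
            (p.γ * p.lam) ^ j • Matrix.vecMul (p.tdErr (a + j) p.θ0) (p.P (a + j) a) := by
      unfold GbarLam
      have h1 : t - a - 1 = k := by omega
      rw [h1, hk, p.GbarLam_key a k]
      abel
    unfold Δbar
    rw [hGL, aux_sum_vecMul]
    rw [Finset.sum_Ico_eq_sum_range]
    have hta : t - a = k + 1 := hk
    rw [hta]
    refine Finset.sum_congr rfl fun j hj => ?_
    rw [show a + j - a = j by omega]
    rw [← Matrix.smul_vecMul, ← Matrix.vecMul_vecMul, Matrix.smul_vecMul, Matrix.smul_vecMul]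
  rw [Finset.sum_congr rfl hΔ]
  have hswap := Finset.sum_Ico_Ico_comm 0 t
    (fun a s => (p.γ * p.lam) ^ (s - a) •
      Matrix.vecMul (p.tdErr s p.θ0) (p.P s a * p.Dg a p.θ0))
  simp only [Finset.range_eq_Ico] at *
  rw [hswap]
  refine Finset.sum_congr rfl fun s hs => ?_
  rw [p.ebar_eq s, aux_vecMul_sum]
  rw [← Finset.range_eq_Ico]
  refine Finset.sum_congr rfl fun a ha => ?_
  rw [aux_vecMul_smul]

end SGData

end Aux

/-- with `γ, λ ∈ [0,1]` and each synthesiser map continuously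
differentiable, for every `1 ≤ t ≤ T` the accumulate BP(λ) iterates satisfy
`lim_{α→0⁺} (θ_t^{BP}(α) − θ_0)/α = Σ_{a=0}^{t−1} Δ̄_a^t`, i.e. to first order
in `α` the accumulate BP(λ) update equals the offline λ-SG update at `θ0`. -/
theorem BPlam_first_order_is_offline_lamSG
    {d m : ℕ} (p : SGData d m) (T : ℕ)
    (hγ : p.γ ∈ Set.Icc (0 : ℝ) 1) (hlam : p.lam ∈ Set.Icc (0 : ℝ) 1)
    (hg : ∀ t : ℕ, ContDiff ℝ 1 (p.g t))
    (t : ℕ) (ht1 : 1 ≤ t) (htT : t ≤ T) :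
    Filter.Tendsto (fun α : ℝ => α⁻¹ • (p.θBP α t - p.θ0))
      (nhdsWithin 0 (Set.Ioi 0)) (nhds (∑ a ∈ Finset.range t, p.Δbar a t)) := by
  rw [p.sum_Δbar_eq t ht1]
  exact p.tendsto_BP hg t

end
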